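/- Let T be a finite tree with positive vertex weights and positive edge lengths. For any 2-point set X = {x₁, x₂} of points on T, there exists an edge e = (u,v) of T such that x₁ lies in (the closure of) T_u(v) and x₂ lies in (the closure of) T_v(u), and consequently S(X,T) ≥ max{ r(T_u(v)), r(T_v(u)) } ≥ min over edges e' of max of the two one-sided weighted radii determined by e'. Hence the optimal 2-center cost equals min_{e=(u,v)∈E} max{ r(T_u(v)), r(T_v(u)) }. -/

import Mathlib

/-- Length of a walk with respect to edge lengths `ℓ`. -/
def walkLength {V : Type*} {G : SimpleGraph V} (ℓ : V → V → ℝ) :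
    ∀ {u v : V}, G.Walk u v → ℝ :=
  fun p => (p.darts.map fun d => ℓ d.toProd.1 d.toProd.2).sum

/-- Shortest-path distance between vertices of `G` with edge lengths `ℓ`. -/
noncomputable def vdist {V : Type*} (G : SimpleGraph V) (ℓ : V → V → ℝ) (u v : V) : ℝ :=
  sInf {x | ∃ p : G.Walk u v, x = walkLength ℓ p}

/-- Distance from the point on edge `(u,v)` at parameter `s ∈ [0,1]` to vertex `z`. -/
noncomputable def pdist {V : Type*} (G : SimpleGraph V) (ℓ : V → V → ℝ)
    (u v : V) (s : ℝ) (z : V) : ℝ :=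
  min (s * ℓ u v + vdist G ℓ u z) ((1 - s) * ℓ u v + vdist G ℓ v z)

/-- The vertices of the connected component of `G - v` containing `t`. -/
def branch {V : Type*} (G : SimpleGraph V) (v t : V) : Set V :=
  {u | ∃ p : G.Walk t u, v ∉ p.support}

/-- `(a, b, s)` represents a point of the geometric realization of the subtree on the
vertex set `S`: either a point of an edge of `S` or a vertex of `S`. -/
def IsPointOn {V : Type*} (G : SimpleGraph V) (S : Set V) (a b : V) (s : ℝ) : Prop :=
  a ∈ S ∧ b ∈ S ∧ ((G.Adj a b ∧ s ∈ Set.Icc (0:ℝ) 1) ∨ (a = b ∧ s = 0))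

/-- The point `(a,b,s)` lies in the closure of the side with vertex set `A`, where
`vopp` is the endpoint of the deleted edge on the other side. -/
def InClosureOfSide {V : Type*} (A : Set V) (vopp : V) (a b : V) (s : ℝ) : Prop :=
  (a ∈ insert vopp A ∧ b ∈ insert vopp A) ∨ (a = vopp ∧ s = 0) ∨ (b = vopp ∧ s = 1)

/-- `max_{z ∈ S} w(z)·d(x,z)` for the point `x = (a,b,s)`. -/
noncomputable def sideSup {V : Type*} (G : SimpleGraph V) (ℓ : V → V → ℝ) (w : V → ℝ)
    (S : Set V) (a b : V) (s : ℝ) : ℝ :=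
  sSup ((fun z => w z * pdist G ℓ a b s z) '' S)

/-- The weighted radius of the subtree on vertex set `S`. -/
noncomputable def radius {V : Type*} (G : SimpleGraph V) (ℓ : V → V → ℝ) (w : V → ℝ)
    (S : Set V) : ℝ :=
  sInf {x | ∃ a b s, IsPointOn G S a b s ∧ x = sideSup G ℓ w S a b s}

/-- `g(e)` for an edge `e = (u,v)`. -/
noncomputable def gval {V : Type*} (G : SimpleGraph V) (ℓ : V → V → ℝ) (w : V → ℝ)
    (u v : V) : ℝ :=
  max (radius G ℓ w (branch G v u)) (radius G ℓ w (branch G u v))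

/-- `S(X,T)` for the two points `(a,b,s)` and `(a',b',s')`. -/
noncomputable def twoCost {V : Type*} [Fintype V] [Nonempty V] (G : SimpleGraph V)
    (ℓ : V → V → ℝ) (w : V → ℝ) (a b : V) (s : ℝ) (a' b' : V) (s' : ℝ) : ℝ :=
  Finset.univ.sup' Finset.univ_nonempty fun z =>
    w z * min (pdist G ℓ a b s z) (pdist G ℓ a' b' s' z)

namespace Aux
open SimpleGraph Walk

variable {V : Type*} {G : SimpleGraph V} {ℓ : V → V → ℝ}

lemma wl_nil {u : V} : walkLength ℓ (Walk.nil : G.Walk u u) = 0 := rfl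

lemma wl_cons {u v w : V} (h : G.Adj u v) (p : G.Walk v w) :
    walkLength ℓ (Walk.cons h p) = ℓ u v + walkLength ℓ p := by
  simp [walkLength]

lemma wl_append {u v w : V} (p : G.Walk u v) (q : G.Walk v w) :
    walkLength ℓ (p.append q) = walkLength ℓ p + walkLength ℓ q := by
  simp [walkLength, Walk.darts_append]

variable (hℓnn : ∀ u v, 0 ≤ ℓ u v)
include hℓnn

lemma wl_nonneg {u v : V} (p : G.Walk u v) : 0 ≤ walkLength ℓ p := by
  apply List.sum_nonneg
  intro x hx
  simp only [List.mem_map] at hx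
  obtain ⟨d, -, rfl⟩ := hx
  exact hℓnn _ _

lemma wl_dropUntil_le [DecidableEq V] {u v w : V} (p : G.Walk u v) (h : w ∈ p.support) :
    walkLength ℓ (p.dropUntil w h) ≤ walkLength ℓ p := by
  conv_rhs => rw [← p.take_spec h]
  rw [wl_append]
  have := wl_nonneg hℓnn (p.takeUntil w h)
  linarith

lemma wl_bypass_le [DecidableEq V] {u v : V} (p : G.Walk u v) :
    walkLength ℓ p.bypass ≤ walkLength ℓ p := by
  induction p with
  | nil => exact le_rfl
  | @cons a b c h p ih =>
    simp only [Walk.bypass]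
    split_ifs with hs
    · have h1 := wl_dropUntil_le hℓnn p.bypass hs
      have h2 := hℓnn a b
      rw [wl_cons]; linarith
    · rw [wl_cons, wl_cons]; linarith

end Aux
namespace Aux
open SimpleGraph Walk

variable {V : Type*} {G : SimpleGraph V} {ℓ : V → V → ℝ}

lemma wl_reverse (hsym : ∀ u v, ℓ u v = ℓ v u) {u v : V} (p : G.Walk u v) :
    walkLength ℓ p.reverse = walkLength ℓ p := by
  induction p with
  | nil => rfl
  | @cons a b c h p ih =>
    rw [Walk.reverse_cons, wl_append, wl_cons, ih, wl_cons, wl_nil, hsym a b]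
    ring

section
variable (hℓnn : ∀ u v, 0 ≤ ℓ u v)
include hℓnn

lemma vdist_bddBelow (u v : V) :
    BddBelow {x | ∃ p : G.Walk u v, x = walkLength ℓ p} := by
  refine ⟨0, fun x hx => ?_⟩
  obtain ⟨p, rfl⟩ := hx
  exact wl_nonneg hℓnn p

lemma vdist_le (u v : V) (p : G.Walk u v) : vdist G ℓ u v ≤ walkLength ℓ p :=
  csInf_le (vdist_bddBelow hℓnn u v) ⟨p, rfl⟩

lemma vdist_nonneg (hc : G.Connected) (u v : V) : 0 ≤ vdist G ℓ u v := by
  obtain ⟨p⟩ := hc u v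
  refine le_csInf ⟨walkLength ℓ p, p, rfl⟩ ?_
  rintro x ⟨q, rfl⟩
  exact wl_nonneg hℓnn q

lemma vdist_eq [DecidableEq V] (ha : G.IsAcyclic) {u v : V} (p : G.Walk u v)
    (hp : p.IsPath) : vdist G ℓ u v = walkLength ℓ p := by
  refine le_antisymm (vdist_le hℓnn u v p) (le_csInf ⟨_, p, rfl⟩ ?_)
  rintro x ⟨q, rfl⟩
  have h1 : q.bypass = p := by
    have := ha.path_unique ⟨q.bypass, q.bypass_isPath⟩ ⟨p, hp⟩
    exact congrArg Subtype.val this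
  calc walkLength ℓ p = walkLength ℓ q.bypass := by rw [h1]
    _ ≤ walkLength ℓ q := wl_bypass_le hℓnn q

lemma vdist_self [DecidableEq V] (ha : G.IsAcyclic) (u : V) : vdist G ℓ u u = 0 :=
  (vdist_eq hℓnn ha Walk.nil IsPath.nil).trans rfl

lemma vdist_adj [DecidableEq V] (ha : G.IsAcyclic) {u v : V} (h : G.Adj u v) :
    vdist G ℓ u v = ℓ u v := by
  rw [vdist_eq hℓnn ha (Walk.cons h Walk.nil) (by simp [h.ne]), wl_cons, wl_nil, add_zero]

lemma vdist_symm [DecidableEq V] (ha : G.IsAcyclic) (hc : G.Connected)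
    (hsym : ∀ u v, ℓ u v = ℓ v u) (u v : V) : vdist G ℓ u v = vdist G ℓ v u := by
  obtain ⟨p⟩ := hc u v
  rw [vdist_eq hℓnn ha p.bypass p.bypass_isPath,
    vdist_eq hℓnn ha p.bypass.reverse p.bypass_isPath.reverse, wl_reverse hsym]

lemma vdist_triangle [DecidableEq V] (ha : G.IsAcyclic) (hc : G.Connected)
    (u v z : V) : vdist G ℓ u z ≤ vdist G ℓ u v + vdist G ℓ v z := by
  obtain ⟨p⟩ := hc u v
  obtain ⟨q⟩ := hc v z
  rw [vdist_eq hℓnn ha p.bypass p.bypass_isPath, vdist_eq hℓnn ha q.bypass q.bypass_isPath,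
    ← wl_append]
  exact vdist_le hℓnn u z _

end
end Aux
namespace Aux
open SimpleGraph Walk
set_option linter.unusedSectionVars false

variable {V : Type*} [DecidableEq V] {G : SimpleGraph V}

lemma mem_branch_self {u v : V} (h : u ≠ v) : u ∈ branch G v u :=
  ⟨Walk.nil, by simp [h.symm]⟩

lemma branch_cover (hc : G.Connected) {u v : V} (hne : u ≠ v) (z : V) :
    z ∈ branch G v u ∨ z ∈ branch G u v := by
  obtain ⟨p0⟩ := hc u z
  set p := p0.bypass with hp
  have hpath : p.IsPath := p0.bypass_isPath
  by_cases hv : v ∈ p.support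
  · right
    refine ⟨p.dropUntil v hv, fun hu => ?_⟩
    have hnd : p.support.Nodup := hpath.support_nodup
    rw [← p.take_spec hv, Walk.support_append] at hnd
    have hdisj := List.disjoint_of_nodup_append hnd
    have hu1 : u ∈ (p.takeUntil v hv).support := Walk.start_mem_support _
    rw [Walk.support_eq_cons] at hu
    rcases List.mem_cons.mp hu with hu2 | hu2
    · exact hne hu2
    · exact hdisj hu1 hu2
  · exact Or.inl ⟨p, hv⟩

lemma branch_disjoint (ha : G.IsAcyclic) {u v : V} (h : G.Adj u v) {z : V}
    (h1 : z ∈ branch G v u) (h2 : z ∈ branch G u v) : False := by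
  obtain ⟨p, hp⟩ := h1
  obtain ⟨q, hq⟩ := h2
  have hbr := (isAcyclic_iff_forall_edge_isBridge.mp ha) (G.mem_edgeSet.mpr h)
  rw [isBridge_iff] at hbr
  apply hbr
  rw [reachable_delete_edges_iff_exists_walk]
  refine ⟨p.append q.reverse, fun he => ?_⟩
  rw [Walk.edges_append, List.mem_append] at he
  rcases he with he | he
  · exact hp (p.snd_mem_support_of_mem_edges he)
  · rw [Walk.edges_reverse, List.mem_reverse] at he
    exact hq (q.fst_mem_support_of_mem_edges he)

lemma cross_edge (ha : G.IsAcyclic) (hc : G.Connected) {u v : V} (h : G.Adj u v)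
    {y z : V} (hyz : G.Adj y z) (hy : y ∈ branch G v u) (hz : z ∈ branch G u v) :
    y = u ∧ z = v := by
  obtain ⟨p, hp⟩ := hy
  have hzv : z = v := by
    by_contra hzv
    refine branch_disjoint ha h ⟨p.concat hyz, ?_⟩ hz
    rw [Walk.support_concat, List.mem_append]
    rintro (hv | hv)
    · exact hp hv
    · simp at hv; exact hzv hv.symm
  subst hzv
  refine ⟨?_, rfl⟩
  by_contra hyu
  refine branch_disjoint ha h ⟨p, hp⟩ ⟨Walk.cons hyz.symm Walk.nil, ?_⟩
  simp only [Walk.support_cons, Walk.support_nil, List.mem_cons, List.not_mem_nil, or_false]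
  push_neg
  exact ⟨h.ne, fun h' => hyu h'.symm⟩

lemma not_mem_branch (v u : V) : v ∉ branch G v u :=
  fun ⟨p, hp⟩ => hp p.end_mem_support

lemma mem_insert_side (ha : G.IsAcyclic) (hc : G.Connected) {u v : V} (h : G.Adj u v)
    {a b : V} (hab : G.Adj a b ∨ a = b) (haA : a ∈ branch G v u) :
    b ∈ insert v (branch G v u) := by
  rcases hab with hab | rfl
  · rcases branch_cover hc h.ne b with hb | hb
    · exact Set.mem_insert_of_mem _ hb
    · rcases cross_edge ha hc h hab haA hb with ⟨rfl, rfl⟩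
      exact Set.mem_insert _ _
  · exact Set.mem_insert_of_mem _ haA

lemma vdist_cross {ℓ : V → V → ℝ} (hℓnn : ∀ u v, 0 ≤ ℓ u v) (ha : G.IsAcyclic)
    (hc : G.Connected) {u v : V} (h : G.Adj u v) {y z : V}
    (hy : y ∈ branch G u v) (hz : z ∈ branch G v u) :
    vdist G ℓ y u + vdist G ℓ u z ≤ vdist G ℓ y z := by
  obtain ⟨p0⟩ := hc y z
  set p := p0.bypass with hpdef
  have hpath : p.IsPath := p0.bypass_isPath
  have hu : u ∈ p.support := by
    by_contra hu
    obtain ⟨q, hq⟩ := hy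
    refine branch_disjoint ha h hz ⟨q.append p, fun hm => ?_⟩
    rw [Walk.mem_support_append_iff] at hm
    rcases hm with hm | hm
    · exact hq hm
    · exact hu hm
  have : vdist G ℓ y z = walkLength ℓ (p.takeUntil u hu) + walkLength ℓ (p.dropUntil u hu) := by
    rw [vdist_eq hℓnn ha p hpath]
    conv_lhs => rw [← p.take_spec hu]
    exact wl_append _ _
  rw [this]
  exact add_le_add (vdist_le hℓnn _ _ _) (vdist_le hℓnn _ _ _)

end Aux
namespace Aux
open SimpleGraph Walk
set_option linter.unusedSectionVars false

variable {V : Type*} [DecidableEq V] {G : SimpleGraph V} {ℓ : V → V → ℝ}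

section
variable (hℓnn : ∀ u v, 0 ≤ ℓ u v) (hsym : ∀ u v, ℓ u v = ℓ v u)
  (ha : G.IsAcyclic) (hc : G.Connected)
include hℓnn ha hc

lemma pdist_nonneg {a b : V} {s : ℝ} (hs0 : 0 ≤ s) (hs1 : s ≤ 1) (z : V) :
    0 ≤ pdist G ℓ a b s z := by
  have h1 := vdist_nonneg hℓnn hc a z
  have h2 := vdist_nonneg hℓnn hc b z
  have h3 := mul_nonneg hs0 (hℓnn a b)
  have h4 := mul_nonneg (by linarith : (0:ℝ) ≤ 1 - s) (hℓnn a b)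
  exact le_min (by linarith) (by linarith)

lemma pdist_triangle (a b : V) (s : ℝ) (y z : V) :
    pdist G ℓ a b s z ≤ pdist G ℓ a b s y + vdist G ℓ y z := by
  have h1 := vdist_triangle hℓnn ha hc a y z
  have h2 := vdist_triangle hℓnn ha hc b y z
  rcases min_cases (s * ℓ a b + vdist G ℓ a y) ((1 - s) * ℓ a b + vdist G ℓ b y) with
    ⟨he, -⟩ | ⟨he, -⟩ <;> unfold pdist <;> rw [he]
  · exact le_trans (min_le_left _ _) (by linarith)
  · exact le_trans (min_le_right _ _) (by linarith)

include hsym in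
lemma pdist_pt {a b : V} {s : ℝ} (hab : G.Adj a b ∨ a = b) (hs0 : 0 ≤ s) (hs1 : s ≤ 1)
    (y z : V) : vdist G ℓ y z ≤ pdist G ℓ a b s y + pdist G ℓ a b s z := by
  have hab' : vdist G ℓ a b ≤ ℓ a b := by
    rcases hab with hab | rfl
    · exact (vdist_adj hℓnn ha hab).le
    · rw [vdist_self hℓnn ha]; exact hℓnn a a
  have t1 := vdist_triangle hℓnn ha hc y a z
  have t2 := vdist_triangle hℓnn ha hc y b z
  have t3 := vdist_triangle hℓnn ha hc a b z
  have t4 := vdist_triangle hℓnn ha hc b a z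
  have sya := vdist_symm hℓnn ha hc hsym y a
  have syb := vdist_symm hℓnn ha hc hsym y b
  have sab := vdist_symm hℓnn ha hc hsym a b
  have h3 := mul_nonneg hs0 (hℓnn a b)
  have h4 := mul_nonneg (by linarith : (0:ℝ) ≤ 1 - s) (hℓnn a b)
  unfold pdist
  rcases min_cases (s * ℓ a b + vdist G ℓ a y) ((1 - s) * ℓ a b + vdist G ℓ b y) with
    ⟨he, -⟩ | ⟨he, -⟩ <;> rw [he] <;>
  rcases min_cases (s * ℓ a b + vdist G ℓ a z) ((1 - s) * ℓ a b + vdist G ℓ b z) with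
    ⟨hf, -⟩ | ⟨hf, -⟩ <;> rw [hf] <;> nlinarith [hℓnn a b]

include hsym in
lemma pdist_vertexA {a b : V} (hab : G.Adj a b) {s : ℝ} (hs0 : 0 ≤ s) (hs1 : s ≤ 1) :
    pdist G ℓ a b s a = s * ℓ a b := by
  have h1 : vdist G ℓ a a = 0 := vdist_self hℓnn ha a
  have h2 : vdist G ℓ b a = ℓ a b := by
    rw [vdist_symm hℓnn ha hc hsym, vdist_adj hℓnn ha hab]
  have h4 := mul_nonneg (by linarith : (0:ℝ) ≤ 1 - s) (hℓnn a b)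
  unfold pdist
  rw [h1, h2, add_zero]
  exact min_eq_left (by linarith)

include hsym in
lemma pdist_vertexB {a b : V} (hab : G.Adj a b) {s : ℝ} (hs0 : 0 ≤ s) (hs1 : s ≤ 1) :
    pdist G ℓ a b s b = (1 - s) * ℓ a b := by
  have h1 : vdist G ℓ b b = 0 := vdist_self hℓnn ha b
  have h2 : vdist G ℓ a b = ℓ a b := vdist_adj hℓnn ha hab
  have h4 := mul_nonneg hs0 (hℓnn a b)
  unfold pdist
  rw [h1, h2, add_zero]
  exact min_eq_right (by linarith)

lemma pdist_center (u : V) (z : V) : pdist G ℓ u u 0 z = vdist G ℓ u z := by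
  unfold pdist
  rw [zero_mul, zero_add, sub_zero, one_mul]
  exact min_eq_left (by linarith [hℓnn u u])

lemma pdist_s0 {a b : V} (hab : G.Adj a b ∨ a = b) (z : V) :
    pdist G ℓ a b 0 z = vdist G ℓ a z := by
  have hab' : vdist G ℓ a b ≤ ℓ a b := by
    rcases hab with hab | rfl
    · exact (vdist_adj hℓnn ha hab).le
    · rw [vdist_self hℓnn ha]; exact hℓnn a a
  have t := vdist_triangle hℓnn ha hc a b z
  unfold pdist
  rw [zero_mul, zero_add, sub_zero, one_mul]
  exact min_eq_left (by linarith)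

include hsym in
lemma pdist_s1 {a b : V} (hab : G.Adj a b ∨ a = b) (z : V) :
    pdist G ℓ a b 1 z = vdist G ℓ b z := by
  have hab' : vdist G ℓ b a ≤ ℓ a b := by
    rcases hab with hab | rfl
    · rw [vdist_symm hℓnn ha hc hsym, vdist_adj hℓnn ha hab]
    · rw [vdist_self hℓnn ha]; exact hℓnn a a
  have t := vdist_triangle hℓnn ha hc b a z
  unfold pdist
  rw [one_mul, sub_self, zero_mul, zero_add]
  exact min_eq_right (by linarith)

end
end Aux
namespace Aux
open SimpleGraph Walk
set_option linter.unusedSectionVars false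

variable {V : Type*} [DecidableEq V] {G : SimpleGraph V} {ℓ : V → V → ℝ}

section
variable (hℓnn : ∀ u v, 0 ≤ ℓ u v) (hsym : ∀ u v, ℓ u v = ℓ v u)
  (ha : G.IsAcyclic) (hc : G.Connected)
include hℓnn hsym ha hc

lemma point_data {a b : V} {s : ℝ} (hpt : IsPointOn G Set.univ a b s) :
    (G.Adj a b ∨ a = b) ∧ 0 ≤ s ∧ s ≤ 1 := by
  rcases hpt.2.2 with ⟨hadj, hs⟩ | ⟨heq, hs⟩
  · exact ⟨Or.inl hadj, hs.1, hs.2⟩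
  · exact ⟨Or.inr heq, by rw [hs], by rw [hs]; norm_num⟩

lemma lemK {u v : V} (h : G.Adj u v) {a' b' : V} {s' : ℝ}
    (hpt : IsPointOn G Set.univ a' b' s')
    (hcl : InClosureOfSide (branch G u v) u a' b' s')
    {z : V} (hz : z ∈ branch G v u) :
    pdist G ℓ a' b' s' u + vdist G ℓ u z ≤ pdist G ℓ a' b' s' z := by
  obtain ⟨hab, hs0, hs1⟩ := point_data hℓnn hsym ha hc hpt
  have helper : ∀ y ∈ insert u (branch G u v),
      vdist G ℓ y u + vdist G ℓ u z ≤ vdist G ℓ y z := by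
    rintro y (rfl | hy)
    · rw [vdist_self hℓnn ha, zero_add]
    · exact vdist_cross hℓnn ha hc h hy hz
  rcases hcl with ⟨ha', hb'⟩ | ⟨rfl, rfl⟩ | ⟨rfl, rfl⟩
  · have Ha := helper a' ha'
    have Hb := helper b' hb'
    have m1 := min_le_left (s' * ℓ a' b' + vdist G ℓ a' u)
      ((1 - s') * ℓ a' b' + vdist G ℓ b' u)
    have m2 := min_le_right (s' * ℓ a' b' + vdist G ℓ a' u)
      ((1 - s') * ℓ a' b' + vdist G ℓ b' u)
    exact le_min (by unfold pdist; linarith) (by unfold pdist; linarith)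
  · rw [pdist_s0 hℓnn ha hc hab, pdist_s0 hℓnn ha hc hab, vdist_self hℓnn ha, zero_add]
  · rw [pdist_s1 hℓnn hsym ha hc hab, pdist_s1 hℓnn hsym ha hc hab,
      vdist_self hℓnn ha, zero_add]

lemma lemC {u v : V} (h : G.Adj u v) {a b : V} {s : ℝ}
    (hpt : IsPointOn G Set.univ a b s)
    (hcl : InClosureOfSide (branch G v u) v a b s) :
    ∃ a₀ b₀ s₀, IsPointOn G (branch G v u) a₀ b₀ s₀ ∧
      ∀ z ∈ branch G v u, pdist G ℓ a₀ b₀ s₀ z ≤ pdist G ℓ a b s z := by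
  obtain ⟨hab, hs0, hs1⟩ := point_data hℓnn hsym ha hc hpt
  have hu : u ∈ branch G v u := mem_branch_self h.ne
  have hvB : v ∈ branch G u v := mem_branch_self h.ne.symm
  have hvnA : v ∉ branch G v u := not_mem_branch v u
  have key : ∀ z ∈ branch G v u, vdist G ℓ u z ≤ vdist G ℓ v z := by
    intro z hz
    have := vdist_cross hℓnn ha hc h hvB hz
    have := vdist_nonneg hℓnn hc v u
    linarith
  have center : (∀ z ∈ branch G v u, vdist G ℓ u z ≤ pdist G ℓ a b s z) →
      ∃ a₀ b₀ s₀, IsPointOn G (branch G v u) a₀ b₀ s₀ ∧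
      ∀ z ∈ branch G v u, pdist G ℓ a₀ b₀ s₀ z ≤ pdist G ℓ a b s z := by
    intro hbd
    refine ⟨u, u, 0, ⟨hu, hu, Or.inr ⟨rfl, rfl⟩⟩, fun z hz => ?_⟩
    rw [pdist_center hℓnn ha hc]
    exact hbd z hz
  rcases hcl with ⟨ha', hb'⟩ | ⟨rfl, hseq⟩ | ⟨rfl, hseq⟩
  · rcases ha' with rfl | haA
    · -- a = v
      rcases hb' with rfl | hbA
      · -- b = v : point is the vertex v
        rcases hab with hadj | -
        · exact absurd hadj (G.irrefl)
        apply center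
        intro z hz
        rcases hpt.2.2 with ⟨hadj, -⟩ | ⟨-, rfl⟩
        · exact absurd hadj (G.irrefl)
        rw [pdist_s0 hℓnn ha hc (Or.inr rfl)]
        exact key z hz
      · -- a = v, b ∈ A, so b = u
        have hadj : G.Adj b a := by
          rcases hab with hadj | heq
          · exact hadj.symm
          · rw [← heq] at hbA; exact absurd hbA hvnA
        obtain ⟨rfl, -⟩ := cross_edge ha hc h hadj hbA hvB
        apply center
        intro z hz
        have kz := key z hz
        have m1 := mul_nonneg hs0 (hℓnn a b)
        have m2 := mul_nonneg (by linarith : (0:ℝ) ≤ 1 - s) (hℓnn a b)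
        unfold pdist
        exact le_min (by linarith) (by linarith)
    · rcases hb' with rfl | hbA
      · -- b = v, a ∈ A, so a = u
        have hadj : G.Adj a b := by
          rcases hab with hadj | heq
          · exact hadj
          · rw [heq] at haA; exact absurd haA hvnA
        obtain ⟨rfl, -⟩ := cross_edge ha hc h hadj haA hvB
        apply center
        intro z hz
        have kz := key z hz
        have m1 := mul_nonneg hs0 (hℓnn a b)
        have m2 := mul_nonneg (by linarith : (0:ℝ) ≤ 1 - s) (hℓnn a b)
        unfold pdist
        exact le_min (by linarith) (by linarith)
      · -- both in A : the point itself
        exact ⟨a, b, s, ⟨haA, hbA, hpt.2.2⟩, fun z _ => le_rfl⟩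
  · -- a = v, s = 0
    apply center
    intro z hz
    rw [hseq, pdist_s0 hℓnn ha hc hab]
    exact key z hz
  · -- b = v, s = 1
    apply center
    intro z hz
    rw [hseq, pdist_s1 hℓnn hsym ha hc hab]
    exact key z hz

end
end Aux
namespace Aux
open SimpleGraph Walk
set_option linter.unusedSectionVars false

variable {V : Type*} [DecidableEq V] {G : SimpleGraph V} {ℓ : V → V → ℝ}

lemma ivt (φ : V → ℝ) {x y : V} (p : G.Walk x y) (hp : p.IsPath)
    (hx : 0 ≤ φ x) (hy : φ y ≤ 0) (hnil : ¬p.Nil) :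
    ∃ u v, ∃ _h : G.Adj u v, 0 ≤ φ u ∧ φ v ≤ 0 ∧
      (∃ q : G.Walk u x, v ∉ q.support) ∧ (∃ r : G.Walk v y, u ∉ r.support) ∧
      u ∈ p.support ∧ v ∈ p.support := by
  induction p with
  | nil => exact absurd Walk.Nil.nil hnil
  | @cons x m y h q ih =>
    have hq : q.IsPath ∧ x ∉ q.support := (Walk.cons_isPath_iff h q).mp hp
    by_cases hm : φ m ≤ 0
    · refine ⟨x, m, h, hx, hm, ⟨Walk.nil, ?_⟩, ⟨q, hq.2⟩, ?_, ?_⟩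
      · simp [h.ne']
      · exact Walk.start_mem_support _
      · simp
    · push_neg at hm
      have hqnil : ¬q.Nil := by
        intro hqn
        rw [hqn.eq] at hm
        exact absurd hy (by linarith)
      obtain ⟨u, v, h', hu, hv, ⟨q₁, hq₁⟩, ⟨r, hr⟩, husup, hvsup⟩ :=
        ih hq.1 hm.le hy hqnil
      have hvm : v ≠ m := fun he => by rw [he] at hv; linarith
      have hvx : v ≠ x := fun he => hq.2 (he ▸ hvsup)
      refine ⟨u, v, h', hu, hv, ⟨q₁.append (Walk.cons h.symm Walk.nil), ?_⟩, ⟨r, hr⟩, ?_, ?_⟩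
      · rw [Walk.mem_support_append_iff]
        rintro (hmem | hmem)
        · exact hq₁ hmem
        · simp at hmem
          rcases hmem with hmem | hmem
          · exact hvm hmem
          · exact hvx hmem
      · exact List.mem_cons_of_mem _ husup
      · exact List.mem_cons_of_mem _ hvsup

section
variable (hℓnn : ∀ u v, 0 ≤ ℓ u v) (hsym : ∀ u v, ℓ u v = ℓ v u)
  (ha : G.IsAcyclic) (hc : G.Connected)
include hℓnn hsym ha hc

lemma pdist_zero_vertex {a b : V} {s : ℝ} (hpt : IsPointOn G Set.univ a b s)
    (h0 : pdist G ℓ a b s a = 0) (z : V) : pdist G ℓ a b s z = vdist G ℓ a z := by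
  obtain ⟨hab, hs0, hs1⟩ := point_data hℓnn hsym ha hc hpt
  rcases hab with hadj | rfl
  · have hsl : s * ℓ a b = 0 := by
      rw [pdist_vertexA hℓnn hsym ha hc hadj hs0 hs1] at h0
      exact h0
    have tr : vdist G ℓ a z ≤ ℓ a b + vdist G ℓ b z := by
      have := vdist_triangle hℓnn ha hc a b z
      rw [vdist_adj hℓnn ha hadj] at this
      exact this
    unfold pdist
    rw [hsl, zero_add]
    refine min_eq_left ?_
    have : (1 - s) * ℓ a b = ℓ a b - s * ℓ a b := by ring
    rw [this, hsl]
    linarith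
  · rcases hpt.2.2 with ⟨hadj, -⟩ | ⟨-, rfl⟩
    · exact absurd hadj (G.irrefl)
    · exact pdist_s0 hℓnn ha hc (Or.inr rfl) z

lemma exists_neighbor (hE : ∃ u v, G.Adj u v) (z : V) : ∃ n, G.Adj z n := by
  obtain ⟨x, y, hxy⟩ := hE
  by_cases hzx : z = x
  · exact ⟨y, hzx ▸ hxy⟩
  · obtain ⟨p⟩ := hc z x
    cases p with
    | nil => exact absurd rfl hzx
    | cons h q => exact ⟨_, h⟩

/-- Boundary lemma: if `x₂` is strictly closer to `a` than `x₁ = (a,b,s)` is,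
then the edge `(b,a)` works. -/
lemma lemBL {a b : V} {s : ℝ} (hadj : G.Adj a b) (hs0 : 0 ≤ s) (hs1 : s ≤ 1)
    {a' b' : V} {s' : ℝ} (hpt2 : IsPointOn G Set.univ a' b' s')
    (hlt : pdist G ℓ a' b' s' a < pdist G ℓ a b s a) :
    InClosureOfSide (branch G a b) a a b s ∧
    InClosureOfSide (branch G b a) b a' b' s' ∧
    pdist G ℓ a b s b ≤ pdist G ℓ a' b' s' b ∧
    pdist G ℓ a' b' s' a ≤ pdist G ℓ a b s a := by
  obtain ⟨hab2, hs0', hs1'⟩ := point_data hℓnn hsym ha hc hpt2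
  have hbA : b ∈ branch G a b := mem_branch_self hadj.ne.symm
  have haB : a ∈ branch G b a := mem_branch_self hadj.ne
  have hd1a : pdist G ℓ a b s a = s * ℓ a b := pdist_vertexA hℓnn hsym ha hc hadj hs0 hs1
  have hd1b : pdist G ℓ a b s b = (1 - s) * ℓ a b := pdist_vertexB hℓnn hsym ha hc hadj hs0 hs1
  -- x₂ cannot have an endpoint strictly on the b-side
  have hside : ∀ y y₂ : V, (G.Adj y y₂ ∨ y = y₂) → y ∈ branch G a b →
      ℓ a b ≤ vdist G ℓ y a := by
    intro y y₂ hyy hyA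
    have := vdist_cross hℓnn ha hc hadj.symm haB hyA
    have h2 : vdist G ℓ a b = ℓ a b := vdist_adj hℓnn ha hadj
    have h3 := vdist_symm hℓnn ha hc hsym a y
    have h4 := vdist_nonneg hℓnn hc b y
    rw [vdist_adj hℓnn ha hadj] at this
    linarith
  have hnot : ¬(a' ∈ branch G a b ∧ b' ∈ branch G a b) := by
    rintro ⟨h1, h2⟩
    have e1 := hside a' b' hab2 h1
    have e2 := hside b' a' (hab2.imp Adj.symm Eq.symm) h2
    have m1 := mul_nonneg hs0' (hℓnn a' b')
    have m2 := mul_nonneg (by linarith : (0:ℝ) ≤ 1 - s') (hℓnn a' b')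
    have m3 := mul_nonneg (by linarith : (0:ℝ) ≤ 1 - s) (hℓnn a b)
    have : ℓ a b ≤ pdist G ℓ a' b' s' a := le_min (by linarith) (by linarith)
    rw [hd1a] at hlt
    nlinarith [hℓnn a b]
  have hcl2 : a' ∈ insert b (branch G b a) ∧ b' ∈ insert b (branch G b a) := by
    rcases branch_cover hc hadj.ne a' with h1 | h1 <;>
      rcases branch_cover hc hadj.ne b' with h2 | h2
    · exact ⟨Set.mem_insert_of_mem _ h1, Set.mem_insert_of_mem _ h2⟩
    · -- a' ∈ a-side, b' ∈ b-side
      rcases hab2 with hadj2 | heq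
      · obtain ⟨e1, e2⟩ := cross_edge ha hc hadj.symm hadj2.symm h2 h1
        refine ⟨Set.mem_insert_of_mem _ h1, ?_⟩
        rw [e1]; exact Set.mem_insert _ _
      · rw [heq] at h1
        exact (branch_disjoint ha hadj h1 h2).elim
    · rcases hab2 with hadj2 | heq
      · obtain ⟨e1, e2⟩ := cross_edge ha hc hadj.symm hadj2 h1 h2
        refine ⟨?_, Set.mem_insert_of_mem _ h2⟩
        rw [e1]; exact Set.mem_insert _ _
      · rw [heq] at h1
        exact (branch_disjoint ha hadj h2 h1).elim
    · exact absurd ⟨h1, h2⟩ hnot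
  refine ⟨Or.inl ⟨Set.mem_insert _ _, Set.mem_insert_of_mem _ hbA⟩, Or.inl hcl2, ?_, hlt.le⟩
  -- (i): d₁(b) ≤ d₂(b) via the point triangle inequality
  have hpt' := pdist_pt hℓnn hsym ha hc hab2 hs0' hs1' a b
  have h2 : vdist G ℓ a b = ℓ a b := vdist_adj hℓnn ha hadj
  rw [hd1a] at hlt
  rw [hd1b]
  linarith

end
end Aux
namespace Aux
open SimpleGraph Walk
set_option linter.unusedSectionVars false

variable {V : Type*} [DecidableEq V] {G : SimpleGraph V} {ℓ : V → V → ℝ}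

section
variable (hℓnn : ∀ u v, 0 ≤ ℓ u v) (hsym : ∀ u v, ℓ u v = ℓ v u)
  (ha : G.IsAcyclic) (hc : G.Connected)
include hℓnn hsym ha hc

lemma lemE (hℓpos : ∀ u v, G.Adj u v → 0 < ℓ u v) (hE : ∃ u v, G.Adj u v)
    {a b : V} {s : ℝ} (hpt1 : IsPointOn G Set.univ a b s)
    {a' b' : V} {s' : ℝ} (hpt2 : IsPointOn G Set.univ a' b' s') :
    ∃ u v, G.Adj u v ∧ InClosureOfSide (branch G v u) v a b s ∧
      InClosureOfSide (branch G u v) u a' b' s' ∧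
      pdist G ℓ a b s u ≤ pdist G ℓ a' b' s' u ∧
      pdist G ℓ a' b' s' v ≤ pdist G ℓ a b s v := by
  obtain ⟨hab1, hs0, hs1⟩ := point_data hℓnn hsym ha hc hpt1
  obtain ⟨hab2, hs0', hs1'⟩ := point_data hℓnn hsym ha hc hpt2
  by_cases hba : pdist G ℓ a' b' s' a < pdist G ℓ a b s a
  · rcases hab1 with hadj | heq
    · obtain ⟨c1, c2, c3, c4⟩ := lemBL hℓnn hsym ha hc hadj hs0 hs1 hpt2 hba
      exact ⟨b, a, hadj.symm, c1, c2, c3, c4⟩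
    · exfalso
      have hs : s = 0 := by
        rcases hpt1.2.2 with ⟨hadj, -⟩ | ⟨-, h0⟩
        · exact absurd (heq ▸ hadj) G.irrefl
        · exact h0
      rw [hs, pdist_s0 hℓnn ha hc (Or.inr heq), vdist_self hℓnn ha] at hba
      exact absurd hba (not_lt.mpr (pdist_nonneg hℓnn ha hc hs0' hs1' a))
  by_cases hab' : pdist G ℓ a b s a' < pdist G ℓ a' b' s' a'
  · rcases hab2 with hadj | heq
    · obtain ⟨c1, c2, c3, c4⟩ := lemBL hℓnn hsym ha hc hadj hs0' hs1' hpt1 hab'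
      exact ⟨a', b', hadj, c2, c1, c4, c3⟩
    · exfalso
      have hs : s' = 0 := by
        rcases hpt2.2.2 with ⟨hadj, -⟩ | ⟨-, h0⟩
        · exact absurd (heq ▸ hadj) G.irrefl
        · exact h0
      rw [hs, pdist_s0 hℓnn ha hc (Or.inr heq), vdist_self hℓnn ha] at hab'
      exact absurd hab' (not_lt.mpr (pdist_nonneg hℓnn ha hc hs0 hs1 a'))
  push_neg at hba hab'
  by_cases haa : a = a'
  · subst haa
    by_cases ht : pdist G ℓ a b s a ≤ 0
    · have ht0 : pdist G ℓ a b s a = 0 :=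
        le_antisymm ht (pdist_nonneg hℓnn ha hc hs0 hs1 a)
      have ht0' : pdist G ℓ a b' s' a = 0 :=
        le_antisymm (ht0 ▸ hab') (pdist_nonneg hℓnn ha hc hs0' hs1' a)
      have P1 := pdist_zero_vertex hℓnn hsym ha hc hpt1 ht0
      have P2 := pdist_zero_vertex hℓnn hsym ha hc hpt2 ht0'
      obtain ⟨n, hn⟩ := exists_neighbor hℓnn hsym ha hc hE a
      have haA : a ∈ branch G n a := mem_branch_self hn.ne
      have hs'0 : s' = 0 := by
        rcases hab2 with hadj2 | heq2
        · rw [pdist_vertexA hℓnn hsym ha hc hadj2 hs0' hs1'] at ht0'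
          rcases mul_eq_zero.mp ht0' with h0 | h0
          · exact h0
          · exact absurd h0 (ne_of_gt (hℓpos _ _ hadj2))
        · rcases hpt2.2.2 with ⟨hadj2, -⟩ | ⟨-, h0⟩
          · exact absurd (heq2 ▸ hadj2) G.irrefl
          · exact h0
      exact ⟨a, n, hn,
        Or.inl ⟨Set.mem_insert_of_mem _ haA, mem_insert_side ha hc hn hab1 haA⟩,
        Or.inr (Or.inl ⟨rfl, hs'0⟩),
        by rw [P1, P2], by rw [P1, P2]⟩
    · push_neg at ht
      -- positive distance to the common anchor a; cut at x₁'s own edge (b, a)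
      have hadj : G.Adj a b := by
        rcases hab1 with hadj | heq
        · exact hadj
        · exfalso
          have hs : s = 0 := by
            rcases hpt1.2.2 with ⟨hadj, -⟩ | ⟨-, h0⟩
            · exact absurd (heq ▸ hadj) G.irrefl
            · exact h0
          rw [hs, pdist_s0 hℓnn ha hc (Or.inr heq), vdist_self hℓnn ha] at ht
          exact lt_irrefl _ ht
      have hd1a : pdist G ℓ a b s a = s * ℓ a b := pdist_vertexA hℓnn hsym ha hc hadj hs0 hs1
      have hd1b : pdist G ℓ a b s b = (1 - s) * ℓ a b := pdist_vertexB hℓnn hsym ha hc hadj hs0 hs1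
      have hbA : b ∈ branch G a b := mem_branch_self hadj.ne.symm
      have haB : a ∈ branch G b a := mem_branch_self hadj.ne
      have heq2 : pdist G ℓ a b' s' a = pdist G ℓ a b s a := le_antisymm hab' hba
      refine ⟨b, a, hadj.symm,
        Or.inl ⟨Set.mem_insert _ _, Set.mem_insert_of_mem _ hbA⟩,
        Or.inl ⟨Set.mem_insert_of_mem _ haB, mem_insert_side ha hc hadj hab2 haB⟩, ?_, hab'⟩
      -- (i): d₁(b) ≤ d₂(b) via the point triangle inequality
      have hptI := pdist_pt hℓnn hsym ha hc hab2 hs0' hs1' a b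
      have hv : vdist G ℓ a b = ℓ a b := vdist_adj hℓnn ha hadj
      rw [hd1b]
      rw [hd1a] at heq2
      linarith
  · set φ : V → ℝ := fun z => pdist G ℓ a' b' s' z - pdist G ℓ a b s z with hφ
    obtain ⟨p0⟩ := hc a a'
    have hpath := p0.bypass_isPath
    have hnil : ¬p0.bypass.Nil := Walk.not_nil_of_ne haa
    obtain ⟨u, v, hadj, hu, hv, ⟨q, hq⟩, ⟨r, hr⟩, -, -⟩ :=
      ivt φ p0.bypass hpath (by simp only [hφ]; linarith) (by simp only [hφ]; linarith) hnil
    have haA : a ∈ branch G v u := ⟨q, hq⟩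
    have ha'B : a' ∈ branch G u v := ⟨r, hr⟩
    simp only [hφ, sub_nonneg, sub_nonpos] at hu hv
    exact ⟨u, v, hadj,
      Or.inl ⟨Set.mem_insert_of_mem _ haA, mem_insert_side ha hc hadj hab1 haA⟩,
      Or.inl ⟨Set.mem_insert_of_mem _ ha'B, mem_insert_side ha hc hadj.symm hab2 ha'B⟩,
      hu, hv⟩

end
end Aux
namespace Aux
open SimpleGraph Walk
set_option linter.unusedSectionVars false

variable {V : Type*} [DecidableEq V] [Fintype V] [Nonempty V]
  {G : SimpleGraph V} {ℓ : V → V → ℝ} {w : V → ℝ}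

section
variable (hℓnn : ∀ u v, 0 ≤ ℓ u v) (hsym : ∀ u v, ℓ u v = ℓ v u)
  (ha : G.IsAcyclic) (hc : G.Connected) (hw : ∀ z, 0 < w z)
include hℓnn hsym ha hc hw

lemma point_dataS {S : Set V} {a b : V} {s : ℝ} (hpt : IsPointOn G S a b s) :
    0 ≤ s ∧ s ≤ 1 := by
  rcases hpt.2.2 with ⟨-, hs⟩ | ⟨-, hs⟩
  · exact ⟨hs.1, hs.2⟩
  · exact ⟨by rw [hs], by rw [hs]; norm_num⟩

lemma sideSup_mem_le {S : Set V} {a b : V} {s : ℝ} (hpt : IsPointOn G S a b s)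
    {z : V} (hz : z ∈ S) : w z * pdist G ℓ a b s z ≤ sideSup G ℓ w S a b s := by
  have hbdd : BddAbove ((fun z => w z * pdist G ℓ a b s z) '' S) :=
    (S.toFinite.image _).bddAbove
  exact le_csSup hbdd (Set.mem_image_of_mem _ hz)

lemma sideSup_nonneg {S : Set V} {a b : V} {s : ℝ} (hpt : IsPointOn G S a b s) :
    0 ≤ sideSup G ℓ w S a b s := by
  obtain ⟨hs0, hs1⟩ := point_dataS hℓnn hsym ha hc hw hpt
  refine le_trans (b := w a * pdist G ℓ a b s a)
    (mul_nonneg (hw a).le (pdist_nonneg hℓnn ha hc hs0 hs1 a)) ?_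
  exact sideSup_mem_le hℓnn hsym ha hc hw hpt hpt.1

lemma radius_bddBelow (S : Set V) :
    BddBelow {x | ∃ a b s, IsPointOn G S a b s ∧ x = sideSup G ℓ w S a b s} := by
  refine ⟨0, ?_⟩
  rintro x ⟨a, b, s, hpt, rfl⟩
  exact sideSup_nonneg hℓnn hsym ha hc hw hpt

lemma radius_le {S : Set V} {a b : V} {s : ℝ} (hpt : IsPointOn G S a b s) :
    radius G ℓ w S ≤ sideSup G ℓ w S a b s :=
  csInf_le (radius_bddBelow hℓnn hsym ha hc hw S) ⟨a, b, s, hpt, rfl⟩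

lemma radius_nonneg {S : Set V} {t : V} (ht : t ∈ S) : 0 ≤ radius G ℓ w S := by
  refine le_csInf ⟨_, t, t, 0, ⟨ht, ht, Or.inr ⟨rfl, rfl⟩⟩, rfl⟩ ?_
  rintro x ⟨a, b, s, hpt, rfl⟩
  exact sideSup_nonneg hℓnn hsym ha hc hw hpt

lemma twoCost_comm {a b : V} {s : ℝ} {a' b' : V} {s' : ℝ} :
    twoCost G ℓ w a b s a' b' s' = twoCost G ℓ w a' b' s' a b s := by
  unfold twoCost
  apply Finset.sup'_congr _ rfl
  intro z _
  rw [min_comm]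

lemma side_bound {u v : V} (h : G.Adj u v) {a b : V} {s : ℝ} {a' b' : V} {s' : ℝ}
    (hpt1 : IsPointOn G Set.univ a b s) (hpt2 : IsPointOn G Set.univ a' b' s')
    (hcl1 : InClosureOfSide (branch G v u) v a b s)
    (hcl2 : InClosureOfSide (branch G u v) u a' b' s')
    (hi : pdist G ℓ a b s u ≤ pdist G ℓ a' b' s' u) :
    radius G ℓ w (branch G v u) ≤ twoCost G ℓ w a b s a' b' s' := by
  obtain ⟨a₀, b₀, s₀, hpt0, hbd⟩ := lemC hℓnn hsym ha hc h hpt1 hcl1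
  have key2 : ∀ z ∈ branch G v u, pdist G ℓ a b s z ≤ pdist G ℓ a' b' s' z := by
    intro z hz
    have t := pdist_triangle hℓnn ha hc a b s u z
    have k := lemK hℓnn hsym ha hc h hpt2 hcl2 hz
    linarith
  refine le_trans (radius_le hℓnn hsym ha hc hw hpt0) ?_
  refine csSup_le ⟨_, Set.mem_image_of_mem _ (mem_branch_self h.ne : u ∈ branch G v u)⟩ ?_
  rintro x ⟨z, hz, rfl⟩
  have h1 : w z * pdist G ℓ a₀ b₀ s₀ z ≤
      w z * min (pdist G ℓ a b s z) (pdist G ℓ a' b' s' z) :=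
    mul_le_mul_of_nonneg_left
      (le_min (hbd z hz) ((hbd z hz).trans (key2 z hz))) (hw z).le
  refine h1.trans ?_
  unfold twoCost
  exact Finset.le_sup' (fun z => w z * min (pdist G ℓ a b s z) (pdist G ℓ a' b' s' z))
    (Finset.mem_univ z)

lemma gval_le_twoCost {u v : V} (h : G.Adj u v) {a b : V} {s : ℝ} {a' b' : V} {s' : ℝ}
    (hpt1 : IsPointOn G Set.univ a b s) (hpt2 : IsPointOn G Set.univ a' b' s')
    (hcl1 : InClosureOfSide (branch G v u) v a b s)
    (hcl2 : InClosureOfSide (branch G u v) u a' b' s')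
    (hi : pdist G ℓ a b s u ≤ pdist G ℓ a' b' s' u)
    (hii : pdist G ℓ a' b' s' v ≤ pdist G ℓ a b s v) :
    gval G ℓ w u v ≤ twoCost G ℓ w a b s a' b' s' := by
  refine max_le (side_bound hℓnn hsym ha hc hw h hpt1 hpt2 hcl1 hcl2 hi) ?_
  rw [twoCost_comm hℓnn hsym ha hc hw]
  exact side_bound hℓnn hsym ha hc hw h.symm hpt2 hpt1 hcl2 hcl1 hii

end
end Aux

open Aux

/-- For any two points `x₁, x₂` on a tree there is an edge `(u,v)` with `x₁` in the
closure of `u`'s side and `x₂` in the closure of `v`'s side, whence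
`S(X,T) ≥ max(r(T_u(v)), r(T_v(u)))`; consequently the optimal 2-center cost equals
`min_{(u,v)∈E} max(r(T_u(v)), r(T_v(u)))`. -/
theorem stmt16 {V : Type*} [Fintype V] [DecidableEq V] [Nonempty V]
    (G : SimpleGraph V) (hG : G.IsTree)
    (w : V → ℝ) (hw : ∀ v, 0 < w v)
    (ℓ : V → V → ℝ) (hℓsym : ∀ u v, ℓ u v = ℓ v u)
    (hℓpos : ∀ u v, G.Adj u v → 0 < ℓ u v) (hℓnn : ∀ u v, 0 ≤ ℓ u v)
    (hE : ∃ u v, G.Adj u v) :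
    (∀ a b s a' b' s', IsPointOn G Set.univ a b s → IsPointOn G Set.univ a' b' s' →
      ∃ u v, G.Adj u v ∧
        InClosureOfSide (branch G v u) v a b s ∧
        InClosureOfSide (branch G u v) u a' b' s' ∧
        gval G ℓ w u v ≤ twoCost G ℓ w a b s a' b' s') ∧
    sInf {x | ∃ a b s a' b' s', IsPointOn G Set.univ a b s ∧
        IsPointOn G Set.univ a' b' s' ∧ x = twoCost G ℓ w a b s a' b' s'} =
      sInf {x | ∃ u v, G.Adj u v ∧ x = gval G ℓ w u v} := by
  have hc : G.Connected := hG.1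
  have ha : G.IsAcyclic := hG.2
  have part1 : ∀ a b s a' b' s', IsPointOn G Set.univ a b s → IsPointOn G Set.univ a' b' s' →
      ∃ u v, G.Adj u v ∧ InClosureOfSide (branch G v u) v a b s ∧
        InClosureOfSide (branch G u v) u a' b' s' ∧
        gval G ℓ w u v ≤ twoCost G ℓ w a b s a' b' s' := by
    intro a b s a' b' s' hpt1 hpt2
    obtain ⟨u, v, hadj, hcl1, hcl2, hi, hii⟩ :=
      lemE hℓnn hℓsym ha hc hℓpos hE hpt1 hpt2
    exact ⟨u, v, hadj, hcl1, hcl2,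
      gval_le_twoCost hℓnn hℓsym ha hc hw hadj hpt1 hpt2 hcl1 hcl2 hi hii⟩
  refine ⟨part1, ?_⟩
  have hgval0 : ∀ u v : V, G.Adj u v → 0 ≤ gval G ℓ w u v := by
    intro u v hadj
    exact le_trans (radius_nonneg hℓnn hℓsym ha hc hw (mem_branch_self hadj.ne)) (le_max_left _ _)
  have htc0 : ∀ a b s a' b' s', IsPointOn G Set.univ a b s → IsPointOn G Set.univ a' b' s' →
      0 ≤ twoCost G ℓ w a b s a' b' s' := by
    intro a b s a' b' s' hpt1 hpt2
    obtain ⟨hs0, hs1⟩ := point_dataS hℓnn hℓsym ha hc hw hpt1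
    obtain ⟨hs0', hs1'⟩ := point_dataS hℓnn hℓsym ha hc hw hpt2
    have z0 : V := Classical.arbitrary V
    refine le_trans (b := w z0 * min (pdist G ℓ a b s z0) (pdist G ℓ a' b' s' z0)) ?_ ?_
    · exact mul_nonneg (hw z0).le (le_min (pdist_nonneg hℓnn ha hc hs0 hs1 z0)
        (pdist_nonneg hℓnn ha hc hs0' hs1' z0))
    · unfold twoCost
      exact Finset.le_sup' (fun z => w z * min (pdist G ℓ a b s z) (pdist G ℓ a' b' s' z))
        (Finset.mem_univ z0)
  have hLHSbdd : BddBelow {x | ∃ a b s a' b' s', IsPointOn G Set.univ a b s ∧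
      IsPointOn G Set.univ a' b' s' ∧ x = twoCost G ℓ w a b s a' b' s'} := by
    refine ⟨0, ?_⟩
    rintro x ⟨a, b, s, a', b', s', h1, h2, rfl⟩
    exact htc0 a b s a' b' s' h1 h2
  have hRHSbdd : BddBelow {x | ∃ u v, G.Adj u v ∧ x = gval G ℓ w u v} := by
    refine ⟨0, ?_⟩
    rintro x ⟨u, v, hadj, rfl⟩
    exact hgval0 u v hadj
  have hptv : ∀ t : V, IsPointOn G Set.univ t t (0:ℝ) :=
    fun t => ⟨Set.mem_univ t, Set.mem_univ t, Or.inr ⟨rfl, rfl⟩⟩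
  have hLHSne : {x | ∃ a b s a' b' s', IsPointOn G Set.univ a b s ∧
      IsPointOn G Set.univ a' b' s' ∧ x = twoCost G ℓ w a b s a' b' s'}.Nonempty := by
    obtain ⟨t⟩ := ‹Nonempty V›
    exact ⟨_, t, t, 0, t, t, 0, hptv t, hptv t, rfl⟩
  obtain ⟨u0, v0, huv0⟩ := hE
  have hRHSne : {x | ∃ u v, G.Adj u v ∧ x = gval G ℓ w u v}.Nonempty :=
    ⟨_, u0, v0, huv0, rfl⟩
  apply le_antisymm
  · apply le_csInf hRHSne
    rintro x ⟨u, v, hadj, rfl⟩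
    refine le_of_forall_pos_le_add ?_
    intro ε hε
    -- near-optimal centers on both sides
    have hAne : {x | ∃ a b s, IsPointOn G (branch G v u) a b s ∧
        x = sideSup G ℓ w (branch G v u) a b s}.Nonempty := by
      have huA : u ∈ branch G v u := mem_branch_self hadj.ne
      exact ⟨_, u, u, 0, ⟨huA, huA, Or.inr ⟨rfl, rfl⟩⟩, rfl⟩
    have hBne : {x | ∃ a b s, IsPointOn G (branch G u v) a b s ∧
        x = sideSup G ℓ w (branch G u v) a b s}.Nonempty := by
      have hvB : v ∈ branch G u v := mem_branch_self hadj.ne.symm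
      exact ⟨_, v, v, 0, ⟨hvB, hvB, Or.inr ⟨rfl, rfl⟩⟩, rfl⟩
    obtain ⟨x₁, hx₁mem, hx₁⟩ := exists_lt_of_csInf_lt hAne
      (lt_add_of_pos_right (radius G ℓ w (branch G v u)) hε)
    obtain ⟨x₂, hx₂mem, hx₂⟩ := exists_lt_of_csInf_lt hBne
      (lt_add_of_pos_right (radius G ℓ w (branch G u v)) hε)
    obtain ⟨a, b, s, hpt1, rfl⟩ := hx₁mem
    obtain ⟨a', b', s', hpt2, rfl⟩ := hx₂mem
    have hpt1u : IsPointOn G Set.univ a b s := ⟨Set.mem_univ _, Set.mem_univ _, hpt1.2.2⟩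
    have hpt2u : IsPointOn G Set.univ a' b' s' := ⟨Set.mem_univ _, Set.mem_univ _, hpt2.2.2⟩
    refine le_trans (csInf_le hLHSbdd ⟨a, b, s, a', b', s', hpt1u, hpt2u, rfl⟩) ?_
    -- twoCost ≤ gval + ε
    unfold twoCost
    apply Finset.sup'_le
    intro z _
    rcases branch_cover hc hadj.ne z with hz | hz
    · have h1 := sideSup_mem_le hℓnn hℓsym ha hc hw hpt1 hz
      have h2 : w z * min (pdist G ℓ a b s z) (pdist G ℓ a' b' s' z) ≤
          w z * pdist G ℓ a b s z :=
        mul_le_mul_of_nonneg_left (min_le_left _ _) (hw z).le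
      have h3 : radius G ℓ w (branch G v u) ≤ gval G ℓ w u v := le_max_left _ _
      linarith
    · have h1 := sideSup_mem_le hℓnn hℓsym ha hc hw hpt2 hz
      have h2 : w z * min (pdist G ℓ a b s z) (pdist G ℓ a' b' s' z) ≤
          w z * pdist G ℓ a' b' s' z :=
        mul_le_mul_of_nonneg_left (min_le_right _ _) (hw z).le
      have h3 : radius G ℓ w (branch G u v) ≤ gval G ℓ w u v := le_max_right _ _
      linarith
  · apply le_csInf hLHSne
    rintro x ⟨a, b, s, a', b', s', hpt1, hpt2, rfl⟩
    obtain ⟨u, v, hadj, hcl1, hcl2, hgood⟩ := part1 a b s a' b' s' hpt1 hpt2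
    exact le_trans (csInf_le hRHSbdd ⟨u, v, hadj, rfl⟩) hgood
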